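/- Let L be a compact positive semi-definite self-adjoint operator on a real separable Hilbert space with ‖L‖ ≤ C*, let θ > 0, let l ≤ k, and let γ_l, …, γ_k ∈ [0, 1/C*]. Then ‖L^θ π_l^k(L)‖ ≤ sqrt( ((θ/e)^{2θ} + C*^{2θ}) / (1 + (∑_{j=l}^k γ_j)^{2θ}) ). -/

import Mathlib

open scoped RealInnerProductSpace ENNReal

lemma sum_Icc_eq_list (f : ℕ → ℝ) (l k : ℕ) :
    ∑ j ∈ Finset.Icc l k, f j = ((List.range' l (k + 1 - l)).map f).sum := by
  rw [Finset.sum, Nat.Icc_eq_range']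
  simp [Multiset.map_coe, Multiset.sum_coe]

lemma list_prod_bounds (γ : ℕ → ℝ) (x : ℝ) :
    ∀ s : List ℕ, (∀ i ∈ s, 0 ≤ γ i * x ∧ γ i * x ≤ 1) →
      0 ≤ (s.map (fun i => 1 - γ i * x)).prod ∧
        (s.map (fun i => 1 - γ i * x)).prod ≤ Real.exp (-(x * (s.map γ).sum)) := by
  intro s
  induction s with
  | nil => intro _; simp
  | cons a t ih =>
    intro h
    obtain ⟨h1, h2⟩ := h a (by simp)
    obtain ⟨ih1, ih2⟩ := ih fun i hi => h i (List.mem_cons_of_mem _ hi)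
    simp only [List.map_cons, List.prod_cons, List.sum_cons]
    constructor
    · exact mul_nonneg (by linarith) ih1
    · have hfac : (1 : ℝ) - γ a * x ≤ Real.exp (-(γ a * x)) := by
        have := Real.add_one_le_exp (-(γ a * x)); linarith
      calc (1 - γ a * x) * (t.map (fun i => 1 - γ i * x)).prod
          ≤ Real.exp (-(γ a * x)) * Real.exp (-(x * (t.map γ).sum)) := by
            apply mul_le_mul hfac ih2 ih1 (Real.exp_nonneg _)
        _ = Real.exp (-(x * (γ a + (t.map γ).sum))) := by
            rw [← Real.exp_add]; ring_nf

lemma peak_bound (θ x G : ℝ) (hθ : 0 < θ) (hx : 0 ≤ x) (hG : 0 ≤ G) :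
    x ^ θ * Real.exp (-(x * G)) * G ^ θ ≤ (θ / Real.exp 1) ^ θ := by
  have hrhs : 0 ≤ (θ / Real.exp 1) ^ θ :=
    Real.rpow_nonneg (by positivity) _
  rcases eq_or_lt_of_le hx with hx0 | hx0
  · rw [← hx0, Real.zero_rpow hθ.ne']; simpa using hrhs
  rcases eq_or_lt_of_le hG with hG0 | hG0
  · rw [← hG0, Real.zero_rpow hθ.ne']; simpa using hrhs
  have hkey := Real.log_le_sub_one_of_pos (show (0:ℝ) < x * G / θ by positivity)
  rw [Real.log_div (by positivity) hθ.ne', Real.log_mul hx0.ne' hG0.ne'] at hkey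
  have hθG : θ * (x * G / θ) = x * G := by field_simp
  have hlog : Real.log x * θ + -(x * G) + Real.log G * θ ≤ (Real.log θ - 1) * θ := by
    nlinarith [mul_le_mul_of_nonneg_left hkey hθ.le]
  rw [Real.rpow_def_of_pos hx0, Real.rpow_def_of_pos hG0,
    Real.rpow_def_of_pos (by positivity : (0:ℝ) < θ / Real.exp 1),
    Real.log_div hθ.ne' (Real.exp_ne_zero 1), Real.log_exp,
    ← Real.exp_add, ← Real.exp_add]
  exact Real.exp_le_exp.2 hlog

lemma prod_diag {H : Type*} [NormedAddCommGroup H] [InnerProductSpace ℝ H]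
    (L : H →L[ℝ] H) (γ : ℕ → ℝ) (v : H) (c : ℝ) (hv : L v = c • v) :
    ∀ s : List ℕ, ((s.map (fun i => (1 : H →L[ℝ] H) - γ i • L)).prod) v =
      ((s.map (fun i => 1 - γ i * c)).prod) • v := by
  intro s
  induction s with
  | nil => simp
  | cons a t ih =>
    simp only [List.map_cons, List.prod_cons, ContinuousLinearMap.mul_apply, ih]
    rw [map_smul]
    simp only [ContinuousLinearMap.sub_apply, ContinuousLinearMap.one_apply,
      ContinuousLinearMap.smul_apply, hv, smul_smul]
    rw [smul_sub, smul_smul, ← sub_smul]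
    congr 1
    ring

lemma repr_diag {H : Type*} [NormedAddCommGroup H] [InnerProductSpace ℝ H]
    [CompleteSpace H] (e : HilbertBasis ℕ ℝ H) (T : H →L[ℝ] H) (μ : ℕ → ℝ)
    (h : ∀ j, T (e j) = μ j • e j) (x : H) (i : ℕ) :
    e.repr (T x) i = μ i * e.repr x i := by
  have h1 : HasSum (fun j => e.repr x j • e j) x := e.hasSum_repr x
  have h2 := h1.mapL T
  simp only [ContinuousLinearMap.map_smul, h] at h2
  have h3 := h2.mapL (innerSL ℝ (e i))
  have h4 : HasSum (fun j : ℕ => if j = i then μ i * e.repr x i else 0)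
      ⟪e i, T x⟫ := by
    refine h3.congr_fun fun j => ?_
    simp only [innerSL_apply_apply, inner_smul_right]
    rcases eq_or_ne j i with rfl | hji
    · simp [orthonormal_iff_ite.1 e.orthonormal, e.orthonormal.1 j, mul_comm]
    · simp [orthonormal_iff_ite.1 e.orthonormal, hji, (Ne.symm hji)]
  have := h4.tsum_eq
  rw [tsum_ite_eq] at this
  rw [e.repr_apply_apply, ← this]

lemma diag_norm_le {H : Type*} [NormedAddCommGroup H] [InnerProductSpace ℝ H]
    [CompleteSpace H] (e : HilbertBasis ℕ ℝ H) (T : H →L[ℝ] H) (μ : ℕ → ℝ)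
    (h : ∀ j, T (e j) = μ j • e j) (c : ℝ) (hc : 0 ≤ c) (hμ : ∀ j, |μ j| ≤ c) :
    ‖T‖ ≤ c := by
  refine T.opNorm_le_bound hc fun x => ?_
  have key : ‖T x‖ ^ 2 ≤ (c * ‖x‖) ^ 2 := by
    have e1 : ‖T x‖ = ‖e.repr (T x)‖ := (e.repr.norm_map (T x)).symm
    have e2 : ‖x‖ = ‖e.repr x‖ := (e.repr.norm_map x).symm
    have hp : (0:ℝ) < (2 : ℝ≥0∞).toReal := by norm_num
    have n1 := lp.norm_rpow_eq_tsum hp (e.repr (T x))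
    have n2 := lp.norm_rpow_eq_tsum hp (e.repr x)
    have htoReal : (2 : ℝ≥0∞).toReal = (2:ℝ) := by norm_num
    rw [htoReal] at n1 n2
    have hsum2 : Summable (fun i => ‖e.repr x i‖ ^ (2:ℝ)) := by
      have := (lp.memℓp (e.repr x)).summable hp
      simpa [htoReal] using this
    have hsum1 : Summable (fun i => ‖e.repr (T x) i‖ ^ (2:ℝ)) := by
      have := (lp.memℓp (e.repr (T x))).summable hp
      simpa [htoReal] using this
    have hle : ∀ i, ‖e.repr (T x) i‖ ^ (2:ℝ) ≤ c^2 * ‖e.repr x i‖ ^ (2:ℝ) := by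
      intro i
      rw [repr_diag e T μ h x i]
      have : |μ i * e.repr x i| ≤ c * |e.repr x i| := by
        rw [abs_mul]
        exact mul_le_mul_of_nonneg_right (hμ i) (abs_nonneg _)
      calc ‖μ i * e.repr x i‖ ^ (2:ℝ) = |μ i * e.repr x i| ^ 2 := by
            rw [Real.rpow_two]; rfl
        _ ≤ (c * |e.repr x i|) ^ 2 := by
            apply pow_le_pow_left₀ (abs_nonneg _) this
        _ = c^2 * ‖e.repr x i‖ ^ (2:ℝ) := by
            rw [mul_pow, Real.rpow_two]; rfl
    calc ‖T x‖ ^ 2 = ‖e.repr (T x)‖ ^ (2:ℝ) := by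
          rw [e1, Real.rpow_two]
      _ = ∑' i, ‖e.repr (T x) i‖ ^ (2:ℝ) := n1
      _ ≤ ∑' i, c^2 * ‖e.repr x i‖ ^ (2:ℝ) :=
          Summable.tsum_le_tsum hle hsum1 (hsum2.mul_left _)
      _ = c^2 * ∑' i, ‖e.repr x i‖ ^ (2:ℝ) := (tsum_mul_left)
      _ = c^2 * ‖e.repr x‖ ^ (2:ℝ) := by rw [n2]
      _ = (c * ‖x‖)^2 := by rw [e2, Real.rpow_two, mul_pow]
  have h0 : 0 ≤ c * ‖x‖ := mul_nonneg hc (norm_nonneg _)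
  nlinarith [norm_nonneg (T x)]

theorem stmt3 {H : Type*} [NormedAddCommGroup H] [InnerProductSpace ℝ H]
    [CompleteSpace H] [TopologicalSpace.SeparableSpace H]
    (L Lθ : H →L[ℝ] H) (hLcompact : IsCompactOperator L)
    (hLsa : IsSelfAdjoint L) (hLpos : ∀ x : H, 0 ≤ ⟪L x, x⟫)
    (e : HilbertBasis ℕ ℝ H) (ω : ℕ → ℝ) (hω : ∀ j, 0 ≤ ω j)
    (hdiag : ∀ j, L (e j) = ω j • e j)
    (θ Cstar : ℝ) (hθ : 0 < θ) (hC : 0 < Cstar) (hLnorm : ‖L‖ ≤ Cstar)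
    (hLθ : ∀ j, Lθ (e j) = ω j ^ θ • e j)
    (γ : ℕ → ℝ) (l k : ℕ) (hlk : l ≤ k)
    (hγ : ∀ i, l ≤ i → i ≤ k → γ i ∈ Set.Icc (0 : ℝ) (1 / Cstar)) :
    ‖Lθ * ((List.range' l (k + 1 - l)).map (fun i => (1 : H →L[ℝ] H) - γ i • L)).prod‖ ≤
      Real.sqrt (((θ / Real.exp 1) ^ (2 * θ) + Cstar ^ (2 * θ)) /
        (1 + (∑ j ∈ Finset.Icc l k, γ j) ^ (2 * θ))) := by
  set s : List ℕ := List.range' l (k + 1 - l) with hs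
  set G : ℝ := ∑ j ∈ Finset.Icc l k, γ j with hG
  have hmem : ∀ i ∈ s, l ≤ i ∧ i ≤ k := by
    intro i hi
    rw [hs, List.mem_range'_1] at hi
    omega
  have hGnn : 0 ≤ G := Finset.sum_nonneg fun j hj => by
    rw [Finset.mem_Icc] at hj
    exact (hγ j hj.1 hj.2).1
  have hGsum : G = (s.map γ).sum := sum_Icc_eq_list γ l k
  -- eigenvalue bounds
  have hωC : ∀ j, ω j ≤ Cstar := by
    intro j
    have h1 : ‖e j‖ = 1 := e.orthonormal.1 j
    have h2 : ‖L (e j)‖ ≤ ‖L‖ * ‖e j‖ := L.le_opNorm _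
    rw [hdiag j, norm_smul, h1, Real.norm_eq_abs, abs_of_nonneg (hω j), mul_one,
      mul_one] at h2
    linarith
  set μ : ℕ → ℝ := fun j => ω j ^ θ * (s.map (fun i => 1 - γ i * ω j)).prod with hμ
  have hTdiag : ∀ j, (Lθ * (s.map (fun i => (1 : H →L[ℝ] H) - γ i • L)).prod) (e j)
      = μ j • e j := by
    intro j
    rw [ContinuousLinearMap.mul_apply, prod_diag L γ (e j) (ω j) (hdiag j) s,
      map_smul, hLθ j, smul_smul, hμ]
    simp [mul_comm]
  refine diag_norm_le e _ μ hTdiag _ (Real.sqrt_nonneg _) fun j => ?_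
  -- scalar bound for each eigenvalue
  set x : ℝ := ω j with hx
  have hx0 : 0 ≤ x := hω j
  have hxC : x ≤ Cstar := hωC j
  have hpb := list_prod_bounds γ x s (by
    intro i hi
    obtain ⟨hil, hik⟩ := hmem i hi
    obtain ⟨hg0, hg1⟩ := hγ i hil hik
    constructor
    · exact mul_nonneg hg0 hx0
    · calc γ i * x ≤ (1 / Cstar) * Cstar :=
            mul_le_mul hg1 hxC hx0 (by positivity)
        _ = 1 := by field_simp)
  obtain ⟨hP0, hPle⟩ := hpb
  rw [← hGsum] at hPle
  set P : ℝ := (s.map (fun i => 1 - γ i * x)).prod with hPdef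
  have hμ0 : 0 ≤ μ j := mul_nonneg (Real.rpow_nonneg hx0 _) hP0
  have hP1 : P ≤ 1 := le_trans hPle (by
    rw [Real.exp_le_one_iff]
    simp only [neg_nonpos]
    exact mul_nonneg hx0 hGnn)
  have hB : μ j ≤ Cstar ^ θ := by
    calc μ j ≤ x ^ θ * 1 := by
          exact mul_le_mul_of_nonneg_left hP1 (Real.rpow_nonneg hx0 _)
      _ = x ^ θ := mul_one _
      _ ≤ Cstar ^ θ := Real.rpow_le_rpow hx0 hxC hθ.le
  have hA : μ j * G ^ θ ≤ (θ / Real.exp 1) ^ θ := by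
    calc μ j * G ^ θ ≤ (x ^ θ * Real.exp (-(x * G))) * G ^ θ := by
          apply mul_le_mul_of_nonneg_right _ (Real.rpow_nonneg hGnn _)
          exact mul_le_mul_of_nonneg_left hPle (Real.rpow_nonneg hx0 _)
      _ ≤ (θ / Real.exp 1) ^ θ := peak_bound θ x G hθ hx0 hGnn
  -- convert rpow (2θ) to squares
  have hsq : ∀ a : ℝ, 0 ≤ a → a ^ (2 * θ) = (a ^ θ) ^ 2 := by
    intro a ha
    rw [mul_comm, Real.rpow_mul ha, Real.rpow_two]
  have hθe : (0:ℝ) ≤ θ / Real.exp 1 := by positivity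
  rw [hsq _ hθe, hsq _ hC.le, hsq _ hGnn]
  set A : ℝ := (θ / Real.exp 1) ^ θ
  set B : ℝ := Cstar ^ θ
  set D : ℝ := G ^ θ
  have hA0 : 0 ≤ A := Real.rpow_nonneg hθe _
  have hB0 : 0 ≤ B := Real.rpow_nonneg hC.le _
  have hD0 : 0 ≤ D := Real.rpow_nonneg hGnn _
  have h1D : (0:ℝ) < 1 + D ^ 2 := by positivity
  have hkey : (μ j) ^ 2 * (1 + D ^ 2) ≤ A ^ 2 + B ^ 2 := by nlinarith [mul_le_mul hB hB hμ0 hB0, mul_le_mul hA hA (mul_nonneg hμ0 hD0) hA0]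
  rw [abs_of_nonneg hμ0, show μ j = Real.sqrt ((μ j) ^ 2) from (Real.sqrt_sq hμ0).symm]
  apply Real.sqrt_le_sqrt
  rw [le_div_iff₀ h1D]
  exact hkey
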